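/- Let (ν_ε)_{ε>0} be positive reals, (μ_ε)_{ε>0} ⊂ (0,1), (ℓ_ε)_{ε>0} positive reals, (I_ε)_{ε>0} Borel subsets of ℝ with Lebesgue measure ℓ_ε, and for each ε let f_ε : (0,∞) → [0,∞) be a probability density with f_ε ∈ L²((0,∞)). Set h_ε := μ_ε·f_ε and u_ε := (ν_ε ℓ_ε/(1−μ_ε))^{−1/2}·1_{I_ε}. If μ_ε → 0 and ν_ε ℓ_ε → ∞ as ε → 0⁺, then 𝔏'(ν_ε, μ_ε, u_ε, h_ε) → 0 and 𝔏̃'(ν_ε, μ_ε, u_ε, h_ε) → 0. (This is the concluding convergence claim of Example 5.5.) -/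

import Mathlib

open MeasureTheory Real Filter Topology
open scoped ENNReal

/-- The `L^p` norm (with respect to Lebesgue measure on `ℝ`) as a real number. -/
noncomputable def lpNorm (p : ℝ≥0∞) (f : ℝ → ℝ) : ℝ :=
  (eLpNorm f p volume).toReal

/-- The spectral-theory Gaussian bound `𝔏'(ν,μ,u,h)` of Theorem 5.2. -/
noncomputable def Lbound' (ν μ : ℝ) (u h : ℝ → ℝ) : ℝ :=
  Real.sqrt (2 / π) *
      Real.sqrt ((1 - ν / (1 - μ) * lpNorm 2 u ^ 2) ^ 2
        + ν / (1 - μ) ^ 3 *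
            min (μ ^ 2 * lpNorm 2 (fun t => u t ^ 2) ^ 2)
              (lpNorm 2 h ^ 2 * lpNorm 1 (fun t => u t ^ 2) ^ 2))
    + ν / (1 - μ) * lpNorm 3 u ^ 3
    + 2 * Real.sqrt (2 / π) * ν * μ / (1 - μ) ^ 2 * lpNorm 2 u ^ 2
    + ν * μ / (1 - μ) ^ 2 * lpNorm 2 u * lpNorm 2 (fun t => u t ^ 2)

/-- The bound `𝔏̃'(ν,μ,u,h)` for the approximated first chaos (Theorem 5.2). -/
noncomputable def LboundTilde' (ν μ : ℝ) (u h : ℝ → ℝ) : ℝ :=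
  Lbound' ν μ u h
    + Real.sqrt ν / (1 - μ) ^ ((3 : ℝ) / 2) *
        min (μ * lpNorm 2 u) (lpNorm 2 h * lpNorm 1 u)

lemma lpNorm_nonneg (p : ℝ≥0∞) (f : ℝ → ℝ) : 0 ≤ lpNorm p f :=
  ENNReal.toReal_nonneg

lemma lpNorm_ind (p : ℝ≥0∞) (hp0 : p ≠ 0) (hpt : p ≠ ∞) {s : Set ℝ}
    (hs : MeasurableSet s) {L a : ℝ} (hL : 0 ≤ L)
    (hvol : volume s = ENNReal.ofReal L) (ha : 0 ≤ a) :
    lpNorm p (s.indicator fun _ => a) = a * L ^ (1 / p.toReal) := by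
  unfold _root_.lpNorm
  rw [eLpNorm_indicator_const hs hp0 hpt, hvol,
    ENNReal.ofReal_rpow_of_nonneg hL (by positivity), ENNReal.toReal_mul,
    ENNReal.toReal_ofReal (by positivity), toReal_enorm,
    Real.norm_eq_abs, abs_of_nonneg ha]

set_option maxHeartbeats 2000000 in
lemma key (n L m : ℝ) (h : ℝ → ℝ) (hn : 0 < n) (hL : 0 < L) (hm : 0 < m)
    (hm2 : m ≤ 1/2) (hP : 2 ≤ n * L) {s : Set ℝ} (hs : MeasurableSet s)
    (hvol : volume s = ENNReal.ofReal L) :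
    LboundTilde' n m (fun t => (Real.sqrt (n * L / (1 - m)))⁻¹ * s.indicator (fun _ => 1) t) h
      ≤ 9 * m + Real.sqrt (1 / (n * L)) := by
  have h1m : (0:ℝ) < 1 - m := by linarith
  have hnL : (0:ℝ) < n * L := by positivity
  set a : ℝ := (Real.sqrt (n * L / (1 - m)))⁻¹ with ha_def
  have ha : 0 < a := by rw [ha_def]; positivity
  have ha2 : a ^ 2 = (1 - m) / (n * L) := by
    rw [ha_def, inv_pow, Real.sq_sqrt (by positivity), inv_div]
  have hu : (fun t => a * s.indicator (fun _ => (1:ℝ)) t) = s.indicator (fun _ => a) := by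
    ext t; by_cases ht : t ∈ s <;> simp [ht]
  have husq : (fun t => (a * s.indicator (fun _ => (1:ℝ)) t) ^ 2)
      = s.indicator (fun _ => a ^ 2) := by
    ext t; by_cases ht : t ∈ s <;> simp [ht]
  simp only [LboundTilde', Lbound', hu, husq]
  rw [lpNorm_ind 2 (by norm_num) (by norm_num) hs hL.le hvol ha.le,
      lpNorm_ind 3 (by norm_num) (by norm_num) hs hL.le hvol ha.le,
      lpNorm_ind 2 (by norm_num) (by norm_num) hs hL.le hvol (sq_nonneg a)]
  simp only [ENNReal.toReal_ofNat]
  set q : ℝ := L ^ ((1:ℝ)/2) with hq_def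
  set r : ℝ := L ^ ((1:ℝ)/3) with hr_def
  have hq0 : 0 < q := by rw [hq_def]; positivity
  have hq : q ^ 2 = L := by
    rw [hq_def, ← Real.rpow_natCast (L ^ ((1:ℝ)/2)) 2, ← Real.rpow_mul hL.le]
    norm_num
  have hr : r ^ 3 = L := by
    rw [hr_def, ← Real.rpow_natCast (L ^ ((1:ℝ)/3)) 3, ← Real.rpow_mul hL.le]
    norm_num
  have hS0 : (0:ℝ) ≤ Real.sqrt (2/π) := Real.sqrt_nonneg _
  have hS1 : Real.sqrt (2/π) ≤ 1 := by
    calc Real.sqrt (2/π) ≤ Real.sqrt 1 :=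
          Real.sqrt_le_sqrt (by rw [div_le_one Real.pi_pos]; nlinarith [Real.pi_gt_three])
      _ = 1 := Real.sqrt_one
  set B : ℝ := lpNorm 2 h ^ 2 * lpNorm 1 (s.indicator fun x => a ^ 2) ^ 2 with hB_def
  set C : ℝ := lpNorm 2 h * lpNorm 1 (s.indicator fun x => a) with hC_def
  clear_value B C
  clear hu husq hB_def hC_def
  clear_value a q r
  have hz : 1 - n / (1-m) * (a*q)^2 = 0 := by
    have e : (a*q)^2 = a^2 * L := by rw [mul_pow, hq]
    rw [e, ha2]; field_simp; ring
  have hT1 : Real.sqrt (2/π) * Real.sqrt ((1 - n/(1-m)*(a*q)^2)^2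
      + n/(1-m)^3 * min (m^2*(a^2*q)^2) B) ≤ m := by
    have hinner : n/(1-m)^3 * min (m^2*(a^2*q)^2) B ≤ m^2 := by
      have h1 : min (m^2*(a^2*q)^2) B ≤ m^2*(a^2*q)^2 := min_le_left _ _
      have h2 : n/(1-m)^3 * (m^2*(a^2*q)^2) = m^2/((1-m)*(n*L)) := by
        have e : (a^2*q)^2 = ((1-m)/(n*L))^2 * L := by rw [mul_pow, hq, ha2]
        rw [e]; field_simp
      have h3 : m^2/((1-m)*(n*L)) ≤ m^2 := div_le_self (by positivity) (by nlinarith)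
      calc n/(1-m)^3 * min (m^2*(a^2*q)^2) B ≤ n/(1-m)^3 * (m^2*(a^2*q)^2) :=
            mul_le_mul_of_nonneg_left h1 (by positivity)
        _ = m^2/((1-m)*(n*L)) := h2
        _ ≤ m^2 := h3
    have hsq : Real.sqrt ((1 - n/(1-m)*(a*q)^2)^2
        + n/(1-m)^3 * min (m^2*(a^2*q)^2) B) ≤ m := by
      have hle : (1 - n/(1-m)*(a*q)^2)^2 + n/(1-m)^3 * min (m^2*(a^2*q)^2) B ≤ m^2 := by
        rw [hz]; simpa using hinner
      calc Real.sqrt ((1 - n/(1-m)*(a*q)^2)^2 + n/(1-m)^3 * min (m^2*(a^2*q)^2) B)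
          ≤ Real.sqrt (m^2) := Real.sqrt_le_sqrt hle
        _ = m := Real.sqrt_sq hm.le
    calc Real.sqrt (2/π) * Real.sqrt ((1 - n/(1-m)*(a*q)^2)^2
          + n/(1-m)^3 * min (m^2*(a^2*q)^2) B)
        ≤ 1 * Real.sqrt ((1 - n/(1-m)*(a*q)^2)^2
          + n/(1-m)^3 * min (m^2*(a^2*q)^2) B) :=
          mul_le_mul_of_nonneg_right hS1 (Real.sqrt_nonneg _)
      _ = Real.sqrt ((1 - n/(1-m)*(a*q)^2)^2
          + n/(1-m)^3 * min (m^2*(a^2*q)^2) B) := one_mul _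
      _ ≤ m := hsq
  have hT2 : n/(1-m) * (a*r)^3 ≤ Real.sqrt (1/(n*L)) := by
    have e : n/(1-m)*(a*r)^3 = a := by
      rw [mul_pow, hr, show a^3 = a*a^2 by ring, ha2]; field_simp
    rw [e]
    calc a = Real.sqrt (a^2) := (Real.sqrt_sq ha.le).symm
      _ = Real.sqrt ((1-m)/(n*L)) := by rw [ha2]
      _ ≤ Real.sqrt (1/(n*L)) := Real.sqrt_le_sqrt
          ((div_le_div_iff_of_pos_right hnL).mpr (by linarith))
  have ha1 : a ≤ 1 := by
    calc a = Real.sqrt (a^2) := (Real.sqrt_sq ha.le).symm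
      _ ≤ Real.sqrt 1 := Real.sqrt_le_sqrt (by rw [ha2, div_le_one hnL]; linarith)
      _ = 1 := Real.sqrt_one
  have hT3 : 2*Real.sqrt (2/π)*n*m/(1-m)^2 * (a*q)^2 ≤ 4*m := by
    have e : 2*Real.sqrt (2/π)*n*m/(1-m)^2 * (a*q)^2 = 2*Real.sqrt (2/π)*m/(1-m) := by
      rw [mul_pow, hq, ha2]; field_simp
    rw [e, div_le_iff₀ h1m]
    nlinarith [mul_nonneg hm.le (sub_nonneg.mpr hS1),
      mul_nonneg hm.le (by linarith : (0:ℝ) ≤ 1/2 - m)]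
  have hT4 : n*m/(1-m)^2 * (a*q) * (a^2*q) ≤ 2*m := by
    have e : n*m/(1-m)^2 * (a*q) * (a^2*q) = m*a/(1-m) := by
      rw [show n*m/(1-m)^2*(a*q)*(a^2*q) = n*m/(1-m)^2 * (a*a^2) *q^2 by ring, hq,
        show a*a^2 = a^3 by ring, show a^3 = a*a^2 by ring, ha2]
      field_simp
    rw [e, div_le_iff₀ h1m]
    linarith [mul_le_mul_of_nonneg_left ha1 hm.le, mul_le_mul_of_nonneg_left hm2 hm.le]
  have hT5 : Real.sqrt n/(1-m)^((3:ℝ)/2) * min (m*(a*q)) C ≤ 2*m := by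
    have hc0 : 0 ≤ Real.sqrt n / (1-m)^((3:ℝ)/2) :=
      div_nonneg (Real.sqrt_nonneg _) (Real.rpow_nonneg h1m.le _)
    have hW0 : 0 ≤ Real.sqrt n/(1-m)^((3:ℝ)/2) * (m*(a*q)) :=
      mul_nonneg hc0 (mul_nonneg hm.le (mul_nonneg ha.le hq0.le))
    have hrp : ((1-m) ^ ((3:ℝ)/2)) ^ 2 = (1-m)^3 := by
      rw [← Real.rpow_natCast ((1-m)^((3:ℝ)/2)) 2, ← Real.rpow_mul h1m.le,
        ← Real.rpow_natCast (1-m) 3]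
      norm_num
    have hW2 : (Real.sqrt n/(1-m)^((3:ℝ)/2) * (m*(a*q)))^2 = m^2/(1-m)^2 := by
      rw [show (Real.sqrt n/(1-m)^((3:ℝ)/2) * (m*(a*q)))^2
          = (Real.sqrt n)^2 * (m^2 * (a^2 * q^2)) / (((1-m)^((3:ℝ)/2))^2) by ring,
        Real.sq_sqrt hn.le, hq, hrp, ha2]
      field_simp
    have hWle : Real.sqrt n/(1-m)^((3:ℝ)/2) * (m*(a*q)) ≤ 2*m := by
      have h2m : (0:ℝ) ≤ 2*m := by linarith
      have hcmp : (Real.sqrt n/(1-m)^((3:ℝ)/2) * (m*(a*q)))^2 ≤ (2*m)^2 := by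
        rw [hW2, div_le_iff₀ (by positivity)]
        nlinarith [mul_nonneg (mul_nonneg (sq_nonneg m) (by linarith : (0:ℝ) ≤ 1-2*m))
          (by linarith : (0:ℝ) ≤ 3-2*m)]
      calc Real.sqrt n/(1-m)^((3:ℝ)/2) * (m*(a*q))
          = Real.sqrt ((Real.sqrt n/(1-m)^((3:ℝ)/2) * (m*(a*q)))^2) := (Real.sqrt_sq hW0).symm
        _ ≤ Real.sqrt ((2*m)^2) := Real.sqrt_le_sqrt hcmp
        _ = 2*m := Real.sqrt_sq h2m
    calc Real.sqrt n/(1-m)^((3:ℝ)/2) * min (m*(a*q)) C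
        ≤ Real.sqrt n/(1-m)^((3:ℝ)/2) * (m*(a*q)) :=
          mul_le_mul_of_nonneg_left (min_le_left _ _) hc0
      _ ≤ 2*m := hWle
  linarith

lemma extra_nonneg (ν μ : ℝ) (u h : ℝ → ℝ) (hμ0 : 0 ≤ μ) (hμ1 : μ < 1) :
    0 ≤ Real.sqrt ν / (1 - μ) ^ ((3 : ℝ) / 2) *
        min (μ * lpNorm 2 u) (lpNorm 2 h * lpNorm 1 u) := by
  have h1 : (0:ℝ) < 1 - μ := by linarith
  exact mul_nonneg (div_nonneg (Real.sqrt_nonneg _) (Real.rpow_nonneg h1.le _))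
    (le_min (mul_nonneg hμ0 (lpNorm_nonneg _ _))
      (mul_nonneg (lpNorm_nonneg _ _) (lpNorm_nonneg _ _)))

lemma Lbound'_nonneg (ν μ : ℝ) (u h : ℝ → ℝ) (hν : 0 ≤ ν) (hμ0 : 0 ≤ μ) (hμ1 : μ < 1) :
    0 ≤ Lbound' ν μ u h := by
  have h1 : (0:ℝ) < 1 - μ := by linarith
  have n2 := lpNorm_nonneg 2 u
  have n3 := lpNorm_nonneg 3 u
  have nsq := lpNorm_nonneg 2 (fun t => u t ^ 2)
  have hS0 : (0:ℝ) ≤ Real.sqrt (2/π) := Real.sqrt_nonneg _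
  unfold Lbound'
  apply add_nonneg
  apply add_nonneg
  apply add_nonneg
  · exact mul_nonneg (Real.sqrt_nonneg _) (Real.sqrt_nonneg _)
  · exact mul_nonneg (div_nonneg hν h1.le) (pow_nonneg n3 3)
  · exact mul_nonneg (div_nonneg
      (mul_nonneg (mul_nonneg (by positivity) hν) hμ0) (by positivity)) (sq_nonneg _)
  · exact mul_nonneg (mul_nonneg
      (div_nonneg (mul_nonneg hν hμ0) (by positivity)) n2) nsq

lemma Lbound'_le_tilde (ν μ : ℝ) (u h : ℝ → ℝ) (hμ0 : 0 ≤ μ) (hμ1 : μ < 1) :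
    Lbound' ν μ u h ≤ LboundTilde' ν μ u h :=
  le_add_of_nonneg_right (extra_nonneg ν μ u h hμ0 hμ1)

/-- The concluding convergence claim of Example 5.5: with `h_ε = μ_ε f_ε` (each `f_ε`
a square-integrable probability density on `(0,∞)`, viewed on `ℝ` vanishing on
`(−∞,0]`) and `u_ε = (ν_ε ℓ_ε/(1−μ_ε))^{−1/2}·1_{I_ε}` (with `I_ε` of Lebesgue measure
`ℓ_ε`), if `μ_ε → 0` and `ν_ε ℓ_ε → ∞` as `ε → 0⁺`, then both
`𝔏'(ν_ε,μ_ε,u_ε,h_ε) → 0` and `𝔏̃'(ν_ε,μ_ε,u_ε,h_ε) → 0`. -/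
theorem example_5_5_convergence (ν μ ℓ : ℝ → ℝ) (I : ℝ → Set ℝ) (f : ℝ → ℝ → ℝ)
    (hν : ∀ ε > (0 : ℝ), 0 < ν ε)
    (hμ : ∀ ε > (0 : ℝ), μ ε ∈ Set.Ioo (0 : ℝ) 1)
    (hℓ : ∀ ε > (0 : ℝ), 0 < ℓ ε)
    (hI : ∀ ε > (0 : ℝ), MeasurableSet (I ε) ∧ volume (I ε) = ENNReal.ofReal (ℓ ε))
    (hf : ∀ ε > (0 : ℝ), Measurable (f ε) ∧ (∀ x, 0 ≤ f ε x) ∧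
      (∀ x ≤ (0 : ℝ), f ε x = 0) ∧ Integrable (f ε) volume ∧
      (∫ x, f ε x) = 1 ∧ MemLp (f ε) 2 volume)
    (hμ0 : Tendsto μ (𝓝[>] 0) (𝓝 0))
    (hνℓ : Tendsto (fun ε => ν ε * ℓ ε) (𝓝[>] 0) atTop) :
    let h : ℝ → ℝ → ℝ := fun ε x => μ ε * f ε x
    let u : ℝ → ℝ → ℝ := fun ε t => (Real.sqrt (ν ε * ℓ ε / (1 - μ ε)))⁻¹ *
      (I ε).indicator (fun _ => (1 : ℝ)) t
    Tendsto (fun ε => Lbound' (ν ε) (μ ε) (u ε) (h ε)) (𝓝[>] 0) (𝓝 0) ∧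
    Tendsto (fun ε => LboundTilde' (ν ε) (μ ε) (u ε) (h ε)) (𝓝[>] 0) (𝓝 0) := by
  intro h u
  set g : ℝ → ℝ := fun ε => 9 * μ ε + Real.sqrt (1 / (ν ε * ℓ ε)) with hg_def
  have hg : Tendsto g (𝓝[>] (0:ℝ)) (𝓝 0) := by
    have g1 : Tendsto (fun ε => 9 * μ ε) (𝓝[>] (0:ℝ)) (𝓝 0) := by
      simpa using hμ0.const_mul 9
    have g0 : Tendsto (fun ε => 1 / (ν ε * ℓ ε)) (𝓝[>] (0:ℝ)) (𝓝 0) := by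
      have := hνℓ.inv_tendsto_atTop
      simp only [Pi.inv_def] at this
      simpa only [one_div] using this
    have g2 : Tendsto (fun ε => Real.sqrt (1 / (ν ε * ℓ ε))) (𝓝[>] (0:ℝ)) (𝓝 0) := by
      have := (Real.continuous_sqrt.tendsto 0).comp g0
      simpa only [Function.comp_def, Real.sqrt_zero] using this
    simpa only [add_zero] using g1.add g2
  have hev : ∀ᶠ ε in 𝓝[>] (0:ℝ),
      0 ≤ Lbound' (ν ε) (μ ε) (u ε) (h ε) ∧
      LboundTilde' (ν ε) (μ ε) (u ε) (h ε) ≤ g ε ∧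
      Lbound' (ν ε) (μ ε) (u ε) (h ε) ≤ LboundTilde' (ν ε) (μ ε) (u ε) (h ε) := by
    have e1 : ∀ᶠ ε in 𝓝[>] (0:ℝ), 0 < ε := eventually_mem_nhdsWithin
    have e2 : ∀ᶠ ε in 𝓝[>] (0:ℝ), μ ε < 1/2 :=
      hμ0.eventually (eventually_lt_nhds (by norm_num : (0:ℝ) < 1/2))
    have e3 : ∀ᶠ ε in 𝓝[>] (0:ℝ), 2 ≤ ν ε * ℓ ε := hνℓ.eventually_ge_atTop 2
    filter_upwards [e1, e2, e3] with ε hε hμ2 hP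
    obtain ⟨hμa, hμb⟩ := hμ ε hε
    obtain ⟨hImeas, hIvol⟩ := hI ε hε
    refine ⟨Lbound'_nonneg _ _ _ _ (hν ε hε).le hμa.le hμb, ?_,
      Lbound'_le_tilde _ _ _ _ hμa.le hμb⟩
    exact key (ν ε) (ℓ ε) (μ ε) (h ε) (hν ε hε) (hℓ ε hε) hμa hμ2.le hP hImeas hIvol
  constructor
  · exact squeeze_zero' (hev.mono fun ε he => he.1)
      (hev.mono fun ε he => he.2.2.trans he.2.1) hg
  · exact squeeze_zero' (hev.mono fun ε he => he.1.trans he.2.2)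
      (hev.mono fun ε he => he.2.1) hg
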